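/- Let m ≥ 0, δ, ε ∈ ℂ, and let u, y¹, …, yᵐ : ℝ² → ℤ → ℂ be functions of (x, t), differentiable in x, satisfying for all n: ∂ₓuₙ = uₙ(uₙ₊₁ − uₙ₋₁) and ∂ₓyʲₙ = uₙ(yʲₙ₊₁ − yʲₙ₋₁) for j = 1, …, m. Define Cₙ = 4t·uₙ(uₙ₊₁ + uₙ + uₙ₋₁) + 2x·uₙ + n − δ + (−1)ⁿε − (y¹ₙ + … + yᵐₙ). Then for all n: ∂ₓCₙ = uₙ(Cₙ₊₁ − Cₙ₋₁). In particular, the constraint Cₙ = 0 for all n is preserved by the x-flow. -/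

import Mathlib

/-- the non-autonomous constraint
`Cₙ = 4tuₙ(uₙ₊₁+uₙ+uₙ₋₁) + 2xuₙ + n − δ + (−1)ⁿε − Σⱼ yʲₙ`
satisfies `∂ₓCₙ = uₙ(Cₙ₊₁ − Cₙ₋₁)` along the Volterra `x`-flow, so the
constraint `Cₙ = 0` is preserved by the `x`-flow. -/
theorem volterra_nonautonomous_constraint_x_flow
    (m : ℕ) (δ ε : ℂ) (u : ℝ → ℝ → ℤ → ℂ) (y : Fin m → ℝ → ℝ → ℤ → ℂ)
    (hu : ∀ (x t : ℝ) (n : ℤ), HasDerivAt (fun x => u x t n)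
      (u x t n * (u x t (n + 1) - u x t (n - 1))) x)
    (hy : ∀ (j : Fin m) (x t : ℝ) (n : ℤ), HasDerivAt (fun x => y j x t n)
      (u x t n * (y j x t (n + 1) - y j x t (n - 1))) x)
    (C : ℝ → ℝ → ℤ → ℂ)
    (hC : ∀ (x t : ℝ) (n : ℤ), C x t n =
      4 * t * u x t n * (u x t (n + 1) + u x t n + u x t (n - 1))
        + 2 * x * u x t n + (n : ℂ) - δ + (-1 : ℂ) ^ n * ε
        - ∑ j : Fin m, y j x t n) :
    ∀ (x t : ℝ) (n : ℤ), HasDerivAt (fun x => C x t n)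
      (u x t n * (C x t (n + 1) - C x t (n - 1))) x := by
  intro x t n
  have e1 : ((n : ℤ) + 1) - 1 = n := by ring
  have e2 : ((n : ℤ) - 1) + 1 = n := by ring
  have e3 : ((n : ℤ) + 1) + 1 = n + 2 := by ring
  have e4 : ((n : ℤ) - 1) - 1 = n - 2 := by ring
  have hfun : (fun x => C x t n) = fun x =>
      4 * (t : ℂ) * u x t n * (u x t (n + 1) + u x t n + u x t (n - 1))
        + 2 * (x : ℂ) * u x t n + (n : ℂ) - δ + (-1 : ℂ) ^ n * ε
        - ∑ j : Fin m, y j x t n := funext fun x => hC x t n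
  have h0 := hu x t n
  have hp := hu x t (n + 1)
  rw [e1, e3] at hp
  have hm := hu x t (n - 1)
  rw [e2, e4] at hm
  have hx : HasDerivAt (fun x : ℝ => (x : ℂ)) 1 x := by
    simpa using (hasDerivAt_id x).ofReal_comp
  have hsum : HasDerivAt (fun x => ∑ j : Fin m, y j x t n)
      (∑ j : Fin m, u x t n * (y j x t (n + 1) - y j x t (n - 1))) x :=
    HasDerivAt.fun_sum fun j _ => hy j x t n
  have hterm1 := (h0.const_mul (4 * (t : ℂ))).mul ((hp.add h0).add hm)
  have hterm2 := (hx.const_mul (2 : ℂ)).mul h0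
  have hall := ((((hterm1.add hterm2).add_const (n : ℂ)).sub_const δ).add_const
      ((-1 : ℂ) ^ n * ε)).sub hsum
  have hval : u x t n * (C x t (n + 1) - C x t (n - 1)) =
      4 * (t : ℂ) * (u x t n * (u x t (n + 1) - u x t (n - 1)))
          * (u x t (n + 1) + u x t n + u x t (n - 1))
        + 4 * (t : ℂ) * u x t n *
          (u x t (n + 1) * (u x t (n + 2) - u x t n)
            + u x t n * (u x t (n + 1) - u x t (n - 1))
            + u x t (n - 1) * (u x t n - u x t (n - 2)))
        + (2 * 1 * u x t n
            + 2 * (x : ℂ) * (u x t n * (u x t (n + 1) - u x t (n - 1))))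
        - ∑ j : Fin m, u x t n * (y j x t (n + 1) - y j x t (n - 1)) := by
    rw [hC x t (n + 1), hC x t (n - 1), e1, e2, e3, e4]
    have hpow1 : (-1 : ℂ) ^ (n + 1) = -(-1 : ℂ) ^ n := by
      rw [zpow_add_one₀ (by norm_num : (-1 : ℂ) ≠ 0)]; ring
    have hpow2 : (-1 : ℂ) ^ (n - 1) = -(-1 : ℂ) ^ n := by
      rw [zpow_sub_one₀ (by norm_num : (-1 : ℂ) ≠ 0)]; ring
    rw [hpow1, hpow2]
    simp only [mul_sub, ← Finset.mul_sum, Finset.sum_sub_distrib]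
    push_cast
    ring
  rw [hfun]
  have hgoal :
      HasDerivAt (fun x =>
        4 * (t : ℂ) * u x t n * (u x t (n + 1) + u x t n + u x t (n - 1))
          + 2 * (x : ℂ) * u x t n + (n : ℂ) - δ + (-1 : ℂ) ^ n * ε
          - ∑ j : Fin m, y j x t n)
        (u x t n * (C x t (n + 1) - C x t (n - 1))) x := by
    rw [hval]
    exact hall
  exact hgoal
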